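/- arXiv:math/0509714 — 2 statements merged into one kernel-verified Lean document; each statement's English description precedes it below -/
import Mathlib

section
/- Let $p,k,l \geq 2$ be integers. Define $Q(k,l) = \{-k+2,-k+4,\ldots,k-2\} \times \{-l+2,\ldots,l-2\} \subset \mathbb{Z}^2$, $R(p,k,l) = \bigcup_{i_3=1}^{p} \big(Q(k,l) + (p+1-2i_3)\cdot(-\tfrac12,-\tfrac12)\big)$ viewed inside $(\tfrac12\mathbb{Z})^2$, and $T(p,k,l) = \big(R(p,k,l)+(\tfrac12,-\tfrac12)\big) \cup \big(R(p,k,l)+(-\tfrac12,\tfrac12)\big)$. Then the cardinality of $T(p,k,l)$ equals $2(k-1)(l-1) + (p-1)(k+l-2)$. -/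
namespace Stmt1Aux

/-- The parametrizing map: `(j,a,b) ↦ ((2j-p+2a)/2, (2j-p+2b)/2)`. -/
def fmap (p : ℤ) (x : ℤ × ℤ × ℤ) : ℚ × ℚ :=
  (((2 * x.1 - p + 2 * x.2.1 : ℤ) : ℚ) / 2, ((2 * x.1 - p + 2 * x.2.2 : ℤ) : ℚ) / 2)

/-- The canonical piece at level `j`. -/
noncomputable def shape (p k l j : ℤ) : Finset (ℤ × ℤ) :=
  if j = 0 then
    ((Finset.Icc 1 (k - 1)).image (fun s => -k + 2 * s)) ×ˢ
      ((Finset.Icc 1 (l - 1)).image (fun t => -l + 1 + 2 * t))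
  else if j = p then
    {k - 2} ×ˢ ((Finset.Icc 1 (l - 1)).image (fun t => -l - 1 + 2 * t))
  else if j = 1 then
    ((Finset.Icc 1 (k - 1)).image (fun s => -k + 2 * s)) ×ˢ
      ((Finset.Icc 1 l).image (fun t => -l - 1 + 2 * t))
  else
    ({k - 2} ×ˢ ((Finset.Icc 1 l).image (fun t => -l - 1 + 2 * t))) ∪
      (((Finset.Icc 1 (k - 2)).image (fun s => -k + 2 * s)) ×ˢ {l - 1})

/-- The canonical index set. -/
noncomputable def D (p k l : ℤ) : Finset (ℤ × ℤ × ℤ) :=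
  (Finset.Icc 0 p).biUnion (fun j => {j} ×ˢ shape p k l j)

/-- Block membership predicate. -/
def B (p k l j a b : ℤ) : Prop :=
  0 ≤ j ∧ j ≤ p ∧ (-k + 2 ≤ a ∧ a ≤ k - 2 ∧ 2 ∣ (a + k)) ∧
    (-l + 1 ≤ b ∧ b ≤ l - 1 ∧ 2 ∣ (b + l + 1)) ∧
    (j = 0 → -l + 3 ≤ b) ∧ (j = p → b ≤ l - 3)

lemma mem_D {p k l : ℤ} (hp : 2 ≤ p) (hk : 2 ≤ k) (hl : 2 ≤ l) (j a b : ℤ) :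
    (j, a, b) ∈ D p k l ↔ B p k l j a b ∧ (2 ≤ j → (a = k - 2 ∨ b = l - 1)) := by
  unfold D B
  simp only [Finset.mem_biUnion, Finset.mem_Icc, Finset.mem_product, Finset.mem_singleton]
  constructor
  · rintro ⟨j', ⟨hj0, hjp⟩, hj, hs⟩
    subst hj
    by_cases h0 : j = 0
    · subst h0
      rw [shape, if_pos rfl] at hs
      simp only [Finset.mem_product, Finset.mem_image, Finset.mem_Icc] at hs
      obtain ⟨⟨s, hs1, hs2⟩, ⟨t, ht1, ht2⟩⟩ := hs
      refine ⟨⟨by omega, by omega, ⟨by omega, by omega, by omega⟩,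
        ⟨by omega, by omega, by omega⟩, by omega, by omega⟩, by omega⟩
    · by_cases hP : j = p
      · subst hP
        rw [shape, if_neg h0, if_pos rfl] at hs
        simp only [Finset.mem_product, Finset.mem_singleton, Finset.mem_image,
          Finset.mem_Icc] at hs
        obtain ⟨ha, ⟨t, ht1, ht2⟩⟩ := hs
        refine ⟨⟨by omega, by omega, ⟨by omega, by omega, by omega⟩,
          ⟨by omega, by omega, by omega⟩, by omega, by omega⟩, by omega⟩
      · by_cases h1 : j = 1
        · subst h1
          rw [shape, if_neg h0, if_neg hP, if_pos rfl] at hs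
          simp only [Finset.mem_product, Finset.mem_image, Finset.mem_Icc] at hs
          obtain ⟨⟨s, hs1, hs2⟩, ⟨t, ht1, ht2⟩⟩ := hs
          refine ⟨⟨by omega, by omega, ⟨by omega, by omega, by omega⟩,
            ⟨by omega, by omega, by omega⟩, by omega, by omega⟩, by omega⟩
        · rw [shape, if_neg h0, if_neg hP, if_neg h1] at hs
          simp only [Finset.mem_union, Finset.mem_product, Finset.mem_singleton,
            Finset.mem_image, Finset.mem_Icc] at hs
          rcases hs with ⟨ha, ⟨t, ht1, ht2⟩⟩ | ⟨⟨s, hs1, hs2⟩, hb⟩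
          · refine ⟨⟨by omega, by omega, ⟨by omega, by omega, by omega⟩,
              ⟨by omega, by omega, by omega⟩, by omega, by omega⟩, by omega⟩
          · refine ⟨⟨by omega, by omega, ⟨by omega, by omega, by omega⟩,
              ⟨by omega, by omega, by omega⟩, by omega, by omega⟩, by omega⟩
  · rintro ⟨⟨hj0, hjp, ⟨ha1, ha2, ha3⟩, ⟨hb1, hb2, hb3⟩, hz, hP'⟩, hcan⟩
    refine ⟨j, ⟨hj0, hjp⟩, rfl, ?_⟩
    by_cases h0 : j = 0
    · subst h0
      rw [shape, if_pos rfl]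
      simp only [Finset.mem_product, Finset.mem_image, Finset.mem_Icc]
      exact ⟨⟨(a + k) / 2, by omega, by omega⟩, ⟨(b + l - 1) / 2, by omega, by omega⟩⟩
    · by_cases hPp : j = p
      · subst hPp
        rw [shape, if_neg h0, if_pos rfl]
        simp only [Finset.mem_product, Finset.mem_singleton, Finset.mem_image, Finset.mem_Icc]
        exact ⟨by omega, ⟨(b + l + 1) / 2, by omega, by omega⟩⟩
      · by_cases h1 : j = 1
        · subst h1
          rw [shape, if_neg h0, if_neg hPp, if_pos rfl]
          simp only [Finset.mem_product, Finset.mem_image, Finset.mem_Icc]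
          exact ⟨⟨(a + k) / 2, by omega, by omega⟩, ⟨(b + l + 1) / 2, by omega, by omega⟩⟩
        · rw [shape, if_neg h0, if_neg hPp, if_neg h1]
          simp only [Finset.mem_union, Finset.mem_product, Finset.mem_singleton,
            Finset.mem_image, Finset.mem_Icc]
          rcases hcan (by omega) with hc | hc
          · exact Or.inl ⟨hc, ⟨(b + l + 1) / 2, by omega, by omega⟩⟩
          · by_cases hak : a = k - 2
            · exact Or.inl ⟨hak, ⟨(b + l + 1) / 2, by omega, by omega⟩⟩
            · exact Or.inr ⟨⟨(a + k) / 2, by omega, by omega⟩, hc⟩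

lemma descend (p k l : ℤ) (hp : 2 ≤ p) (hk : 2 ≤ k) (hl : 2 ≤ l) :
    ∀ n : ℕ, ∀ j a b : ℤ, j ≤ (n : ℤ) → B p k l j a b →
      fmap p (j, a, b) ∈ (D p k l).image (fmap p) := by
  intro n
  induction n with
  | zero =>
    intro j a b hjn hB
    apply Finset.mem_image_of_mem
    rw [mem_D hp hk hl]
    refine ⟨hB, fun h => ?_⟩
    exfalso; push_cast at hjn; omega
  | succ n ih =>
    intro j a b hjn hB
    obtain ⟨hj0, hjp, ⟨ha1, ha2, ha3⟩, ⟨hb1, hb2, hb3⟩, hz, hP'⟩ := hB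
    by_cases h2 : 2 ≤ j
    · by_cases h3 : a = k - 2 ∨ b = l - 1
      · apply Finset.mem_image_of_mem
        rw [mem_D hp hk hl]
        exact ⟨⟨hj0, hjp, ⟨ha1, ha2, ha3⟩, ⟨hb1, hb2, hb3⟩, hz, hP'⟩, fun _ => h3⟩
      · push_neg at h3
        obtain ⟨h3a, h3b⟩ := h3
        have hB' : B p k l (j - 2) (a + 2) (b + 2) := by
          refine ⟨by omega, by omega, ⟨by omega, by omega, by omega⟩,
            ⟨by omega, by omega, by omega⟩, by omega, by omega⟩
        have hmem := ih (j - 2) (a + 2) (b + 2) (by push_cast at hjn ⊢; omega) hB'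
        have he : fmap p (j, a, b) = fmap p (j - 2, a + 2, b + 2) := by
          unfold fmap
          rw [Prod.mk.injEq]
          constructor <;> · push_cast; ring
        rw [he]; exact hmem
    · apply Finset.mem_image_of_mem
      rw [mem_D hp hk hl]
      exact ⟨⟨hj0, hjp, ⟨ha1, ha2, ha3⟩, ⟨hb1, hb2, hb3⟩, hz, hP'⟩, fun h => absurd h h2⟩

noncomputable def Qset (k l : ℤ) : Finset (ℚ × ℚ) :=
  ((Finset.Icc (1 : ℤ) (k - 1)).image (fun i => ((-k + 2 * i : ℤ) : ℚ))) ×ˢ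
  ((Finset.Icc (1 : ℤ) (l - 1)).image (fun i => ((-l + 2 * i : ℤ) : ℚ)))

noncomputable def Rset (p k l : ℤ) : Finset (ℚ × ℚ) :=
  (Finset.Icc (1 : ℤ) p).biUnion (fun i =>
    (Qset k l).image (fun q =>
      (q.1 + ((p + 1 - 2 * i : ℤ) : ℚ) * (-1/2),
       q.2 + ((p + 1 - 2 * i : ℤ) : ℚ) * (-1/2))))

noncomputable def Tset (p k l : ℤ) : Finset (ℚ × ℚ) :=
  ((Rset p k l).image (fun q => (q.1 + 1/2, q.2 - 1/2))) ∪
  ((Rset p k l).image (fun q => (q.1 - 1/2, q.2 + 1/2)))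

theorem Tset_eq (p k l : ℤ) (hp : 2 ≤ p) (hk : 2 ≤ k) (hl : 2 ≤ l) :
    Tset p k l = (D p k l).image (fmap p) := by
  apply Finset.Subset.antisymm
  · intro z hz
    unfold Tset Rset Qset at hz
    simp only [Finset.mem_union, Finset.mem_image, Finset.mem_biUnion, Finset.mem_product,
      Finset.mem_Icc, Prod.exists] at hz
    rcases hz with ⟨q1, q2, ⟨i, ⟨hi1, hi2⟩, w1, w2,
        ⟨⟨s, ⟨hs1, hs2⟩, hw1⟩, ⟨t, ⟨ht1, ht2⟩, hw2⟩⟩, hq⟩, hz⟩ |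
      ⟨q1, q2, ⟨i, ⟨hi1, hi2⟩, w1, w2,
        ⟨⟨s, ⟨hs1, hs2⟩, hw1⟩, ⟨t, ⟨ht1, ht2⟩, hw2⟩⟩, hq⟩, hz⟩
    · rw [Prod.mk.injEq] at hq
      obtain ⟨hq1, hq2⟩ := hq
      subst hw1 hw2 hq1 hq2 hz
      have he : ((((-k + 2 * s : ℤ) : ℚ) + ((p + 1 - 2 * i : ℤ) : ℚ) * (-1/2)) + 1/2,
          ((((-l + 2 * t : ℤ) : ℚ) + ((p + 1 - 2 * i : ℤ) : ℚ) * (-1/2))) - 1/2) =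
          fmap p (i, -k + 2 * s, -l + 2 * t - 1) := by
        unfold fmap
        rw [Prod.mk.injEq]
        constructor <;> (push_cast; ring)
      rw [he]
      exact descend p k l hp hk hl p.toNat _ _ _ (by omega)
        ⟨by omega, by omega, ⟨by omega, by omega, by omega⟩,
         ⟨by omega, by omega, by omega⟩, by omega, by omega⟩
    · rw [Prod.mk.injEq] at hq
      obtain ⟨hq1, hq2⟩ := hq
      subst hw1 hw2 hq1 hq2 hz
      have he : ((((-k + 2 * s : ℤ) : ℚ) + ((p + 1 - 2 * i : ℤ) : ℚ) * (-1/2)) - 1/2,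
          ((((-l + 2 * t : ℤ) : ℚ) + ((p + 1 - 2 * i : ℤ) : ℚ) * (-1/2))) + 1/2) =
          fmap p (i - 1, -k + 2 * s, -l + 2 * t + 1) := by
        unfold fmap
        rw [Prod.mk.injEq]
        constructor <;> (push_cast; ring)
      rw [he]
      exact descend p k l hp hk hl p.toNat _ _ _ (by omega)
        ⟨by omega, by omega, ⟨by omega, by omega, by omega⟩,
         ⟨by omega, by omega, by omega⟩, by omega, by omega⟩
  · intro z hz
    obtain ⟨⟨j, a, b⟩, hd, rfl⟩ := Finset.mem_image.mp hz
    rw [mem_D hp hk hl j a b] at hd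
    obtain ⟨⟨hj0, hjp, ⟨ha1, ha2, ha3⟩, ⟨hb1, hb2, hb3⟩, hz0, hzp⟩, hcan⟩ := hd
    obtain ⟨s, hs1, hs2, rfl⟩ : ∃ s, 1 ≤ s ∧ s ≤ k - 1 ∧ a = -k + 2 * s :=
      ⟨(a + k) / 2, by omega, by omega, by omega⟩
    unfold Tset Rset Qset
    simp only [Finset.mem_union, Finset.mem_image, Finset.mem_biUnion, Finset.mem_product,
      Finset.mem_Icc, Prod.exists]
    by_cases hcase : j = 0 ∨ l - 2 ≤ b
    · obtain ⟨t, ht1, ht2, rfl⟩ : ∃ t, 1 ≤ t ∧ t ≤ l - 1 ∧ b = -l + 2 * t + 1 :=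
        ⟨(b + l - 1) / 2, by omega, by omega, by omega⟩
      right
      refine ⟨_, _, ⟨j + 1, ⟨by omega, by omega⟩, _, _,
        ⟨⟨s, ⟨hs1, hs2⟩, rfl⟩, ⟨t, ⟨ht1, ht2⟩, rfl⟩⟩, rfl⟩, ?_⟩
      unfold fmap
      rw [Prod.mk.injEq]
      constructor <;> (push_cast; ring)
    · obtain ⟨t, ht1, ht2, rfl⟩ : ∃ t, 1 ≤ t ∧ t ≤ l - 1 ∧ b = -l + 2 * t - 1 :=
        ⟨(b + l + 1) / 2, by omega, by omega, by omega⟩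
      left
      refine ⟨_, _, ⟨j, ⟨by omega, by omega⟩, _, _,
        ⟨⟨s, ⟨hs1, hs2⟩, rfl⟩, ⟨t, ⟨ht1, ht2⟩, rfl⟩⟩, rfl⟩, ?_⟩
      unfold fmap
      rw [Prod.mk.injEq]
      constructor <;> (push_cast; ring)

theorem injOn_fmap (p k l : ℤ) (hp : 2 ≤ p) (hk : 2 ≤ k) (hl : 2 ≤ l) :
    Set.InjOn (fmap p) (D p k l : Set (ℤ × ℤ × ℤ)) := by
  rintro ⟨j, a, b⟩ hx ⟨j', a', b'⟩ hy hf
  simp only [Finset.coe_mem, Finset.mem_coe] at hx hy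
  rw [mem_D hp hk hl] at hx hy
  obtain ⟨⟨hj0, hjp, ⟨ha1, ha2, ha3⟩, ⟨hb1, hb2, hb3⟩, hz0, hzp⟩, hcan⟩ := hx
  obtain ⟨⟨hj0', hjp', ⟨ha1', ha2', ha3'⟩, ⟨hb1', hb2', hb3'⟩, hz0', hzp'⟩, hcan'⟩ := hy
  unfold fmap at hf
  rw [Prod.mk.injEq] at hf
  obtain ⟨hf1, hf2⟩ := hf
  have e1 : 2 * j - p + 2 * a = 2 * j' - p + 2 * a' := by
    have := hf1
    field_simp at this
    exact_mod_cast this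
  have e2 : 2 * j - p + 2 * b = 2 * j' - p + 2 * b' := by
    have := hf2
    field_simp at this
    exact_mod_cast this
  have : j = j' ∧ a = a' ∧ b = b' := by omega
  simp [Prod.ext_iff, this.1, this.2.1, this.2.2]

theorem card_D (p k l : ℤ) (hp : 2 ≤ p) (hk : 2 ≤ k) (hl : 2 ≤ l) :
    (D p k l).card = (2 * (k - 1) * (l - 1) + (p - 1) * (k + l - 2)).toNat := by
  have hdisj : ∀ j ∈ Finset.Icc (0:ℤ) p, ∀ j' ∈ Finset.Icc (0:ℤ) p, j ≠ j' →
      Disjoint ({j} ×ˢ shape p k l j) ({j'} ×ˢ shape p k l j') := by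
    intro j _ j' _ hne
    rw [Finset.disjoint_left]
    rintro ⟨x1, x2⟩ h1 h2
    simp only [Finset.mem_product, Finset.mem_singleton] at h1 h2
    exact hne (h1.1 ▸ h2.1 ▸ rfl)
  rw [D, Finset.card_biUnion hdisj]
  have hcardsp : ∀ j ∈ Finset.Icc (0:ℤ) p, ({j} ×ˢ shape p k l j).card = (shape p k l j).card := by
    intro j _
    rw [Finset.card_product, Finset.card_singleton, one_mul]
  rw [Finset.sum_congr rfl hcardsp]
  have hinj2 : Function.Injective (fun s : ℤ => -k + 2 * s) := by
    intro x y h; simp only at h; omega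
  have hinj3 : Function.Injective (fun t : ℤ => -l + 1 + 2 * t) := by
    intro x y h; simp only at h; omega
  have hinj4 : Function.Injective (fun t : ℤ => -l - 1 + 2 * t) := by
    intro x y h; simp only at h; omega
  have hs0 : (shape p k l 0).card = (k-1).toNat * (l-1).toNat := by
    rw [shape, if_pos rfl, Finset.card_product, Finset.card_image_of_injective _ hinj2,
      Finset.card_image_of_injective _ hinj3, Int.card_Icc, Int.card_Icc]
    congr 1 <;> omega
  have hs1 : (shape p k l 1).card = (k-1).toNat * l.toNat := by
    rw [shape, if_neg (by omega), if_neg (by omega), if_pos rfl, Finset.card_product,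
      Finset.card_image_of_injective _ hinj2, Finset.card_image_of_injective _ hinj4,
      Int.card_Icc, Int.card_Icc]
    congr 1 <;> omega
  have hsp : (shape p k l p).card = (l-1).toNat := by
    rw [shape, if_neg (by omega), if_pos rfl, Finset.card_product, Finset.card_singleton,
      Finset.card_image_of_injective _ hinj4, Int.card_Icc, one_mul]
    congr 1; omega
  have hsm : ∀ j ∈ Finset.Icc (2:ℤ) (p-1), (shape p k l j).card = l.toNat + (k-2).toNat := by
    intro j hj
    rw [Finset.mem_Icc] at hj
    rw [shape, if_neg (by omega), if_neg (by omega), if_neg (by omega)]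
    rw [Finset.card_union_of_disjoint]
    · rw [Finset.card_product, Finset.card_singleton, one_mul,
        Finset.card_image_of_injective _ hinj4, Finset.card_product,
        Finset.card_image_of_injective _ hinj2, Finset.card_singleton, mul_one,
        Int.card_Icc, Int.card_Icc]
      congr 1
      · congr 1; omega
      · congr 1; omega
    · rw [Finset.disjoint_left]
      rintro ⟨x1, x2⟩ h1 h2
      simp only [Finset.mem_product, Finset.mem_singleton, Finset.mem_image,
        Finset.mem_Icc] at h1 h2
      obtain ⟨s, hs, hsx⟩ := h2.1
      omega
  have hset : Finset.Icc (0:ℤ) p = insert 0 (insert 1 (insert p (Finset.Icc 2 (p-1)))) := by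
    ext x
    simp only [Finset.mem_insert, Finset.mem_Icc]
    omega
  rw [hset, Finset.sum_insert (by simp only [Finset.mem_insert, Finset.mem_Icc]; omega),
    Finset.sum_insert (by simp only [Finset.mem_insert, Finset.mem_Icc]; omega),
    Finset.sum_insert (by simp only [Finset.mem_Icc]; omega),
    Finset.sum_congr rfl hsm, Finset.sum_const, Int.card_Icc, smul_eq_mul,
    hs0, hs1, hsp]
  obtain ⟨k', rfl⟩ : ∃ n : ℕ, k = (n : ℤ) + 2 := ⟨(k-2).toNat, by omega⟩
  obtain ⟨l', rfl⟩ : ∃ n : ℕ, l = (n : ℤ) + 2 := ⟨(l-2).toNat, by omega⟩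
  obtain ⟨p', rfl⟩ : ∃ n : ℕ, p = (n : ℤ) + 2 := ⟨(p-2).toNat, by omega⟩
  have h1 : ((k' : ℤ) + 2 - 1).toNat = k' + 1 := by omega
  have h2 : ((l' : ℤ) + 2 - 1).toNat = l' + 1 := by omega
  have h3 : ((l' : ℤ) + 2).toNat = l' + 2 := by omega
  have h4 : ((k' : ℤ) + 2 - 2).toNat = k' := by omega
  have h5 : ((p' : ℤ) + 2 - 1 + 1 - 2).toNat = p' := by omega
  rw [h1, h2, h3, h4, h5]
  have h6 : (2 * ((k' : ℤ) + 2 - 1) * ((l' : ℤ) + 2 - 1) +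
      ((p' : ℤ) + 2 - 1) * ((k' : ℤ) + 2 + ((l' : ℤ) + 2) - 2) : ℤ) =
      ((2 * (k' + 1) * (l' + 1) + (p' + 1) * (k' + l' + 2) : ℕ) : ℤ) := by
    push_cast; ring
  rw [h6, Int.toNat_natCast]
  ring

theorem card_Tset (p k l : ℤ) (hp : 2 ≤ p) (hk : 2 ≤ k) (hl : 2 ≤ l) :
    (Tset p k l).card = (2 * (k - 1) * (l - 1) + (p - 1) * (k + l - 2)).toNat := by
  rw [Tset_eq p k l hp hk hl, Finset.card_image_of_injOn (injOn_fmap p k l hp hk hl),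
    card_D p k l hp hk hl]

end Stmt1Aux

/-- With `Q(k,l)` the rectangle of rotation numbers,
`R(p,k,l)` the union of `p` diagonal half-integer shifts of `Q(k,l)`, and `T(p,k,l)`
the union of the two shifts of `R(p,k,l)` by `(±1/2, ∓1/2)`, one has
`|T(p,k,l)| = 2(k-1)(l-1) + (p-1)(k+l-2)`. -/
theorem stmt_1 (p k l : ℤ) (hp : 2 ≤ p) (hk : 2 ≤ k) (hl : 2 ≤ l) :
    let Q : Finset (ℚ × ℚ) :=
      ((Finset.Icc (1 : ℤ) (k - 1)).image (fun i => ((-k + 2 * i : ℤ) : ℚ))) ×ˢ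
      ((Finset.Icc (1 : ℤ) (l - 1)).image (fun i => ((-l + 2 * i : ℤ) : ℚ)))
    let R : Finset (ℚ × ℚ) :=
      (Finset.Icc (1 : ℤ) p).biUnion (fun i =>
        Q.image (fun q =>
          (q.1 + ((p + 1 - 2 * i : ℤ) : ℚ) * (-1/2),
           q.2 + ((p + 1 - 2 * i : ℤ) : ℚ) * (-1/2))))
    let T : Finset (ℚ × ℚ) :=
      (R.image (fun q => (q.1 + 1/2, q.2 - 1/2))) ∪
      (R.image (fun q => (q.1 - 1/2, q.2 + 1/2)))
    T.card = (2 * (k - 1) * (l - 1) + (p - 1) * (k + l - 2)).toNat := by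
  exact Stmt1Aux.card_Tset p k l hp hk hl
end

section
/- Define the negative continued fraction $[a_0, \ldots, a_k]$ as above with all $a_j \geq 2$ integers. If $-\frac{\alpha}{\beta+\alpha} = [a_0, a_1, \ldots, a_k]$ where $\frac{\beta}{\alpha} \in (-1,0)$ is in lowest terms with $\alpha > 0$, and $\alpha', \beta'$ are integers satisfying $\alpha'\beta - \alpha\beta' = 1$ with $0 < \alpha' < \alpha$, then $-\frac{\beta+\alpha}{\beta'+\alpha'} = [a_k, a_{k-1}, \ldots, a_1]$ provided $k \geq 1$. -/
/-- The negative (Hirzebruch–Jung) continued fraction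
`[a₀, a₁, …, a_k] = -a₀ - 1/(-a₁ - 1/(⋯ - 1/(-a_k)))`. -/
def ncf : List ℤ → ℚ
  | [] => 0
  | [a] => (-a : ℤ)
  | a :: b :: L => -(a : ℚ) - 1 / ncf (b :: L)

/-- Numerator continuant of the continued fraction `a₀ - 1/(a₁ - ⋯)`. -/
def nK : List ℤ → ℤ
  | [] => 1
  | [a] => a
  | a :: b :: M => a * nK (b :: M) - nK M

/-- Denominator continuant. -/
def dK : List ℤ → ℤ
  | [] => 0
  | _ :: M => nK M

/-- The "second" numerator continuant (numerator of the list with last entry dropped). -/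
def eK : List ℤ → ℤ
  | [] => 0
  | a :: M => nK ((a :: M).dropLast)

lemma nK_cons (a : ℤ) (M : List ℤ) : nK (a :: M) = a * nK M - dK M := by
  cases M with
  | nil => simp [nK, dK]
  | cons b T => rfl

lemma dK_cons (a : ℤ) (M : List ℤ) : dK (a :: M) = nK M := rfl

lemma eK_cons (a : ℤ) (M : List ℤ) : eK (a :: M) = nK ((a :: M).dropLast) := rfl

lemma growth : ∀ L : List ℤ, (∀ a ∈ L, 2 ≤ a) → 0 ≤ dK L ∧ dK L < nK L
  | [], _ => by simp [nK, dK]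
  | a :: M, h => by
    have IH := growth M (fun x hx => h x (List.mem_cons_of_mem _ hx))
    have ha : 2 ≤ a := h a List.mem_cons_self
    rw [dK_cons, nK_cons]
    constructor
    · omega
    · nlinarith [IH.1, IH.2]

lemma eK_cons_cons (b c : ℤ) (M : List ℤ) :
    eK (b :: c :: M) = b * eK (c :: M) - eK M := by
  cases M with
  | nil => simp [eK, nK]
  | cons d M' =>
    show nK (b :: c :: (d :: M').dropLast) = _
    rw [nK_cons, dK_cons]
    rfl

lemma snoc_nK : ∀ (M : List ℤ) (a : ℤ), nK (M ++ [a]) = a * nK M - eK M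
  | [], a => by simp [nK, eK]
  | [b], a => by simp [nK, eK]; ring
  | b :: c :: M, a => by
    have h1 := snoc_nK (c :: M) a
    have h2 := snoc_nK M a
    simp only [List.cons_append] at h1 ⊢
    rw [nK_cons, dK_cons, h1, h2, eK_cons_cons]
    simp only [nK_cons, dK_cons]
    ring

lemma nK_reverse : ∀ L : List ℤ, nK L.reverse = nK L
  | [] => rfl
  | a :: M => by
    have h1 : nK M.tail.reverse = nK M.tail := nK_reverse M.tail
    have h3 : nK M.reverse = nK M := nK_reverse M
    rw [List.reverse_cons, snoc_nK, h3, nK_cons]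
    congr 1
    cases M with
    | nil => rfl
    | cons b M' =>
      have hne : (b :: M').reverse ≠ [] := by simp
      obtain ⟨c, T, hT⟩ := List.exists_cons_of_ne_nil hne
      rw [hT, eK_cons, ← hT, List.dropLast_reverse, h1]
      rfl
termination_by L => L.length
decreasing_by
  · simp [List.length_tail]
  · simp

lemma nK_pos (L : List ℤ) (h : ∀ a ∈ L, 2 ≤ a) : 0 < nK L :=
  lt_of_le_of_lt (growth L h).1 (growth L h).2

lemma dK_eq (L : List ℤ) (h : L ≠ []) : dK L = nK L.tail := by
  cases L with
  | nil => exact absurd rfl h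
  | cons a M => rfl

lemma eK_eq (L : List ℤ) (h : L ≠ []) : eK L = nK L.dropLast := by
  cases L with
  | nil => exact absurd rfl h
  | cons a M => rfl

lemma tail_reverse (l : List ℤ) : l.reverse.tail = l.dropLast.reverse := by
  have h : l.reverse.reverse.dropLast = l.reverse.tail.reverse := List.dropLast_reverse
  rw [List.reverse_reverse] at h
  rw [h, List.reverse_reverse]

lemma det : ∀ (L : List ℤ), L ≠ [] → dK L * eK L - nK L * dK L.dropLast = 1
  | [a], _ => by simp [nK, dK, eK]
  | a :: b :: M, _ => by
    have IH := det (b :: M) (by simp)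
    have e1 : eK (a :: b :: M) = a * eK (b :: M) - dK ((b :: M).dropLast) := by
      rw [eK_cons, List.dropLast_cons₂, nK_cons, eK_cons]
    have e2 : dK ((a :: b :: M).dropLast) = eK (b :: M) := by
      rw [List.dropLast_cons₂, dK_cons, eK_cons]
    rw [dK_cons a, e1, e2, nK_cons a]
    linear_combination IH

lemma ncf_eq : ∀ (L : List ℤ), L ≠ [] → (∀ a ∈ L, 2 ≤ a) →
    ncf L = -((nK L : ℚ) / (dK L : ℚ))
  | [a], _, _ => by simp [ncf, nK, dK]
  | a :: b :: M, _, h => by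
    have h' : ∀ x ∈ b :: M, 2 ≤ x := fun x hx => h x (List.mem_cons_of_mem _ hx)
    have IH := ncf_eq (b :: M) (by simp) h'
    have hN : (0:ℤ) < nK (b :: M) := nK_pos _ h'
    have hD : (0:ℤ) < dK (b :: M) := by
      rw [dK_cons]
      exact nK_pos _ (fun x hx => h' x (List.mem_cons_of_mem _ hx))
    have hNQ : (nK (b :: M) : ℚ) ≠ 0 := by exact_mod_cast hN.ne'
    have hDQ : (dK (b :: M) : ℚ) ≠ 0 := by exact_mod_cast hD.ne'
    show -(a:ℚ) - 1 / ncf (b :: M) = _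
    rw [IH, dK_cons a (b :: M), nK_cons a (b :: M)]
    push_cast
    field_simp
    ring

/-- If `-α/(β+α) = [a₀, a₁, …, a_k]` with all `aⱼ ≥ 2`, `k ≥ 1`,
`β/α ∈ (-1,0)` in lowest terms with `α > 0`, and `α', β'` satisfy `α'β - αβ' = 1` with
`0 < α' < α`, then `-(β+α)/(β'+α') = [a_k, …, a₁]`. -/
theorem stmt_7 (L : List ℤ) (hlen : 2 ≤ L.length) (hent : ∀ a ∈ L, 2 ≤ a)
    (α β α' β' : ℤ) (hα : 0 < α) (hβ1 : -α < β) (hβ2 : β < 0)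
    (hcop : IsCoprime α β)
    (hncf : -((α : ℚ) / ((β + α : ℤ) : ℚ)) = ncf L)
    (hdet : α' * β - α * β' = 1) (hα'0 : 0 < α') (hα'α : α' < α) :
    -(((β + α : ℤ) : ℚ) / ((β' + α' : ℤ) : ℚ)) = ncf L.tail.reverse := by
  have hne : L ≠ [] := by rintro rfl; simp at hlen
  have hβα : (0:ℤ) < β + α := by omega
  have htne : L.tail ≠ [] := by
    have h1 : L.tail.length = L.length - 1 := List.length_tail
    intro h; rw [h] at h1; simp at h1; omega
  have hdne : L.dropLast ≠ [] := by
    have h1 : L.dropLast.length = L.length - 1 := List.length_dropLast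
    intro h; rw [h] at h1; simp at h1; omega
  have hentT : ∀ a ∈ L.tail, 2 ≤ a := fun a ha => hent a (List.mem_of_mem_tail ha)
  have hentD : ∀ a ∈ L.dropLast, 2 ≤ a := fun a ha => hent a ((List.dropLast_sublist L).subset ha)
  have hentR : ∀ a ∈ L.reverse, 2 ≤ a := fun a ha => hent a (List.mem_reverse.1 ha)
  have hentTR : ∀ a ∈ L.tail.reverse, 2 ≤ a := fun a ha => hentT a (List.mem_reverse.1 ha)
  have hnKL : 0 < nK L := nK_pos L hent
  have hdKL : 0 < dK L := by rw [dK_eq L hne]; exact nK_pos _ hentT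
  have hekL : 0 < eK L := by rw [eK_eq L hne]; exact nK_pos _ hentD
  have heklt : eK L < nK L := by
    rw [eK_eq L hne]
    have h1 : nK L.dropLast = dK L.reverse := by
      rw [dK_eq L.reverse (by simp [hne]), tail_reverse, nK_reverse]
    rw [h1, ← nK_reverse L]
    exact (growth L.reverse hentR).2
  rw [ncf_eq L hne hent] at hncf
  have key : α * dK L = nK L * (β + α) := by
    have h1 : ((β + α : ℤ):ℚ) ≠ 0 := by exact_mod_cast hβα.ne'
    have h2 : ((dK L : ℤ):ℚ) ≠ 0 := by exact_mod_cast hdKL.ne'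
    have h3 : (α:ℚ) / ((β+α:ℤ):ℚ) = (nK L : ℚ)/(dK L:ℚ) := neg_inj.mp hncf
    rw [div_eq_div_iff h1 h2] at h3
    exact_mod_cast h3
  have hd1 := det L hne
  have hcop1 : IsCoprime (nK L) (dK L) := ⟨-(dK L.dropLast), eK L, by linear_combination hd1⟩
  have hcopα : IsCoprime α (β + α) := by
    have h := hcop.add_mul_left_right 1; rwa [mul_one] at h
  have h1 : α ∣ nK L := hcopα.dvd_of_dvd_mul_right ⟨dK L, by linear_combination -key⟩
  have h2 : nK L ∣ α := hcop1.dvd_of_dvd_mul_left ⟨β + α, by linear_combination key⟩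
  have hα_eq : α = nK L := Int.dvd_antisymm hα.le hnKL.le h1 h2
  have hβα_eq : β + α = dK L := by
    have h3 : α * dK L = α * (β + α) := by rw [key, ← hα_eq]
    exact (mul_left_cancel₀ hα.ne' h3).symm
  have hd2 : (β + α) * eK L - α * dK L.dropLast = 1 := by
    rw [hβα_eq, hα_eq]; exact hd1
  have hd3 : (β + α) * α' - α * (β' + α') = 1 := by linear_combination hdet
  have hsub : (β + α) * (eK L - α') = α * (dK L.dropLast - (β' + α')) := by
    linear_combination hd2 - hd3
  have hdvd : α ∣ eK L - α' := hcopα.dvd_of_dvd_mul_left ⟨_, hsub⟩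
  have heklt' : eK L < α := hα_eq ▸ heklt
  have hp : eK L = α' := by
    have h0 := Int.eq_zero_of_abs_lt_dvd hdvd (by rw [abs_lt]; omega)
    omega
  have hq : dK L.dropLast = β' + α' := by
    have h3 : α * (dK L.dropLast - (β' + α')) = 0 := by rw [← hsub, hp]; ring
    have h4 := (mul_eq_zero.mp h3).resolve_left hα.ne'
    omega
  have htrne : L.tail.reverse ≠ [] := by simp [htne]
  rw [ncf_eq L.tail.reverse htrne hentTR]
  have hnum : nK L.tail.reverse = β + α := by
    rw [nK_reverse, ← dK_eq L hne]; exact hβα_eq.symm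
  have hden : dK L.tail.reverse = β' + α' := by
    rw [dK_eq _ htrne, tail_reverse, nK_reverse, ← List.tail_dropLast,
      ← dK_eq L.dropLast hdne]
    exact hq
  rw [hnum, hden]
end
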